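/- Let F be a group and φ₁, φ₂ ∈ Aut(F), with suspensions G₁ = F ⋊_{φ₁} ℤ and G₂ = F ⋊_{φ₂} ℤ, fibers ι₁(F), ι₂(F) and transverse elements t₁, t₂. Then φ₁ and φ₂ are conjugate in Out(F) if and only if there exists a group isomorphism Ψ : G₁ → G₂ whose induced map on abelianizations sends the image of the fiber ι₁(F) into the image of the fiber ι₂(F), and sends the class of t₁ into (class of t₂)·(image of the fiber ι₂(F)). -/

import Mathlib

open SemidirectProduct

private lemma conj_zpow_aux {F : Type*} [Group F] {G : Type*} [Group G] (m : F → G)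
    (α : MulAut F) (c : G) (hc : ∀ a, c * m a * c⁻¹ = m (α a)) :
    ∀ (n : ℤ) (a : F), c ^ n * m a * (c ^ n)⁻¹ = m ((α ^ n) a) := by
  have hc' : ∀ a, c⁻¹ * m a * c = m (α⁻¹ a) := by
    intro a
    have h := hc (α⁻¹ a)
    rw [MulAut.apply_inv_self] at h
    rw [← h]; group
  intro n
  induction n using Int.induction_on with
  | zero => intro a; simp
  | succ n ih =>
    intro a
    have h1 : c ^ ((n : ℤ) + 1) * m a * (c ^ ((n : ℤ) + 1))⁻¹
        = c ^ (n : ℤ) * (c * m a * c⁻¹) * (c ^ (n : ℤ))⁻¹ := by group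
    have h2 : (α ^ ((n : ℤ) + 1)) a = (α ^ (n : ℤ)) (α a) := by
      rw [zpow_add_one, MulAut.mul_apply]
    rw [h1, hc, ih, h2]
  | pred n ih =>
    intro a
    have h1 : c ^ (-(n : ℤ) - 1) * m a * (c ^ (-(n : ℤ) - 1))⁻¹
        = c ^ (-(n : ℤ)) * (c⁻¹ * m a * c) * (c ^ (-(n : ℤ)))⁻¹ := by group
    have h2 : (α ^ (-(n : ℤ) - 1)) a = (α ^ (-(n : ℤ))) (α⁻¹ a) := by
      rw [zpow_sub_one, MulAut.mul_apply]
    rw [h1, hc', ih, h2]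

private lemma susp_conj {F : Type*} [Group F] (φ : MulAut F) (f : F) :
    (SemidirectProduct.inr (Multiplicative.ofAdd 1) :
        F ⋊[zpowersHom (MulAut F) φ] Multiplicative ℤ) * SemidirectProduct.inl f
      * (SemidirectProduct.inr (Multiplicative.ofAdd 1))⁻¹ = SemidirectProduct.inl (φ f) := by
  have h : (zpowersHom (MulAut F) φ) (Multiplicative.ofAdd 1) = φ := by
    simp [zpowersHom_apply]
  have h2 := inl_aut (φ := zpowersHom (MulAut F) φ) (Multiplicative.ofAdd 1) f
  rw [h, map_inv] at h2
  exact h2.symm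

/-- Two automorphisms of `F` are conjugate in `Out(F)` if and only if there is an
isomorphism of the suspensions whose induced map on abelianizations sends the image
of the fiber into the image of the fiber, and sends the class of `t₁` into
`(class of t₂)·(image of the fiber)`. -/
theorem conj_out_iff_abelianized_fiber_orientation_preserving_iso
    {F : Type*} [Group F] (φ₁ φ₂ : MulAut F) :
    let G₁ := F ⋊[zpowersHom (MulAut F) φ₁] Multiplicative ℤ
    let G₂ := F ⋊[zpowersHom (MulAut F) φ₂] Multiplicative ℤ
    let ι₁ : F →* G₁ := SemidirectProduct.inl
    let ι₂ : F →* G₂ := SemidirectProduct.inl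
    let t₁ : G₁ := SemidirectProduct.inr (Multiplicative.ofAdd 1)
    let t₂ : G₂ := SemidirectProduct.inr (Multiplicative.ofAdd 1)
    ((∃ (ψ : MulAut F) (f₀ : F), ∀ f : F, ψ (φ₁ f) = φ₂ (f₀⁻¹ * ψ f * f₀)) ↔
      ∃ Ψ : G₁ ≃* G₂,
        Subgroup.map (Abelianization.map Ψ.toMonoidHom)
            (Subgroup.map Abelianization.of ι₁.range) ≤
          Subgroup.map Abelianization.of ι₂.range ∧
        ∃ x ∈ Subgroup.map Abelianization.of ι₂.range,
          Abelianization.map Ψ.toMonoidHom (Abelianization.of t₁) =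
            Abelianization.of t₂ * x) := by
  intro G₁ G₂ ι₁ ι₂ t₁ t₂
  constructor
  · rintro ⟨ψ, f₀, hψ⟩
    set c : G₂ := t₂ * ι₂ f₀⁻¹ with hc_def
    have hkey : ∀ a : F, c * ι₂ (ψ a) * c⁻¹ = ι₂ (ψ (φ₁ a)) := by
      intro a
      have h2 : t₂ * ι₂ (f₀⁻¹ * ψ a * f₀) * t₂⁻¹ = ι₂ (φ₂ (f₀⁻¹ * ψ a * f₀)) := susp_conj φ₂ _
      calc c * ι₂ (ψ a) * c⁻¹
          = t₂ * ι₂ (f₀⁻¹ * ψ a * f₀) * t₂⁻¹ := by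
            simp [hc_def, map_mul, map_inv, mul_inv_rev, mul_assoc]
            rw [mul_inv_rev, inv_inv]
        _ = ι₂ (φ₂ (f₀⁻¹ * ψ a * f₀)) := h2
        _ = ι₂ (ψ (φ₁ a)) := by rw [← hψ]
    have hzpow := conj_zpow_aux (fun a => ι₂ (ψ a)) φ₁ c hkey
    have hcompat : ∀ g : Multiplicative ℤ,
        (ι₂.comp ψ.toMonoidHom).comp ((zpowersHom (MulAut F) φ₁ g)).toMonoidHom
          = (MulAut.conj (zpowersHom G₂ c g)).toMonoidHom.comp (ι₂.comp ψ.toMonoidHom) := by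
      intro g
      refine MonoidHom.ext fun a => ?_
      simp only [MonoidHom.comp_apply, MulEquiv.coe_toMonoidHom, MulAut.conj_apply,
        zpowersHom_apply]
      exact (hzpow g.toAdd a).symm
    set Ψhom : G₁ →* G₂ :=
      SemidirectProduct.lift (ι₂.comp ψ.toMonoidHom) (zpowersHom G₂ c) hcompat with hΨhom
    set d : G₁ := t₁ * ι₁ (ψ.symm f₀) with hd_def
    have hkey' : ∀ a : F, d * ι₁ (ψ.symm a) * d⁻¹ = ι₁ (ψ.symm (φ₂ a)) := by
      intro a
      have e1 : ψ (φ₁ (ψ.symm (f₀ * a * f₀⁻¹))) = φ₂ a := by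
        rw [hψ, MulEquiv.apply_symm_apply]
        congr 1
        group
      have e2 : φ₁ (ψ.symm (f₀ * a * f₀⁻¹)) = ψ.symm (φ₂ a) := by
        rw [← e1, MulEquiv.symm_apply_apply]
      calc d * ι₁ (ψ.symm a) * d⁻¹
          = t₁ * ι₁ (ψ.symm (f₀ * a * f₀⁻¹)) * t₁⁻¹ := by
            simp [hd_def, map_mul, map_inv, mul_inv_rev, mul_assoc]
        _ = ι₁ (φ₁ (ψ.symm (f₀ * a * f₀⁻¹))) := susp_conj φ₁ _
        _ = ι₁ (ψ.symm (φ₂ a)) := by rw [e2]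
    have hzpow' := conj_zpow_aux (fun a => ι₁ (ψ.symm a)) φ₂ d hkey'
    have hcompat' : ∀ g : Multiplicative ℤ,
        (ι₁.comp ψ.symm.toMonoidHom).comp ((zpowersHom (MulAut F) φ₂ g)).toMonoidHom
          = (MulAut.conj (zpowersHom G₁ d g)).toMonoidHom.comp (ι₁.comp ψ.symm.toMonoidHom) := by
      intro g
      refine MonoidHom.ext fun a => ?_
      simp only [MonoidHom.comp_apply, MulEquiv.coe_toMonoidHom, MulAut.conj_apply,
        zpowersHom_apply]
      exact (hzpow' g.toAdd a).symm
    set Θhom : G₂ →* G₁ :=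
      SemidirectProduct.lift (ι₁.comp ψ.symm.toMonoidHom) (zpowersHom G₁ d) hcompat' with hΘhom
    have hΨinl : ∀ f : F, Ψhom (ι₁ f) = ι₂ (ψ f) := fun f => by
      rw [hΨhom]; exact SemidirectProduct.lift_inl _ _ _ _
    have hΘinl : ∀ f : F, Θhom (ι₂ f) = ι₁ (ψ.symm f) := fun f => by
      rw [hΘhom]; exact SemidirectProduct.lift_inl _ _ _ _
    have hΨt : Ψhom t₁ = c := by
      show Ψhom (SemidirectProduct.inr (Multiplicative.ofAdd 1)) = c
      rw [hΨhom, SemidirectProduct.lift_inr]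
      simp [zpowersHom_apply]
    have hΘt : Θhom t₂ = d := by
      show Θhom (SemidirectProduct.inr (Multiplicative.ofAdd 1)) = d
      rw [hΘhom, SemidirectProduct.lift_inr]
      simp [zpowersHom_apply]
    have hΘΨ : Θhom.comp Ψhom = MonoidHom.id G₁ := by
      apply SemidirectProduct.hom_ext
      · refine MonoidHom.ext fun f => ?_
        show Θhom (Ψhom (ι₁ f)) = ι₁ f
        rw [hΨinl, hΘinl, MulEquiv.symm_apply_apply]
      · apply MonoidHom.ext_mint
        show Θhom (Ψhom t₁) = SemidirectProduct.inr (Multiplicative.ofAdd 1)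
        rw [hΨt, hc_def, map_mul, hΘt, hΘinl, hd_def]
        show t₁ * ι₁ (ψ.symm f₀) * ι₁ (ψ.symm f₀⁻¹) = t₁
        rw [map_inv, map_inv, mul_assoc, mul_inv_cancel, mul_one]
    have hΨΘ : Ψhom.comp Θhom = MonoidHom.id G₂ := by
      apply SemidirectProduct.hom_ext
      · refine MonoidHom.ext fun f => ?_
        show Ψhom (Θhom (ι₂ f)) = ι₂ f
        rw [hΘinl, hΨinl, MulEquiv.apply_symm_apply]
      · apply MonoidHom.ext_mint
        show Ψhom (Θhom t₂) = SemidirectProduct.inr (Multiplicative.ofAdd 1)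
        rw [hΘt, hd_def, map_mul, hΨt, hΨinl, MulEquiv.apply_symm_apply, hc_def]
        show t₂ * ι₂ f₀⁻¹ * ι₂ f₀ = t₂
        rw [map_inv, mul_assoc, inv_mul_cancel, mul_one]
    refine ⟨MonoidHom.toMulEquiv Ψhom Θhom hΘΨ hΨΘ, ?_, ?_⟩
    · intro y hy
      simp only [Subgroup.mem_map, MonoidHom.mem_range] at hy ⊢
      obtain ⟨_, ⟨_, ⟨f, rfl⟩, rfl⟩, rfl⟩ := hy
      refine ⟨ι₂ (ψ f), ⟨ψ f, rfl⟩, ?_⟩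
      rw [Abelianization.map_of]
      congr 1
      exact (hΨinl f).symm
    · refine ⟨Abelianization.of (ι₂ f₀⁻¹), Subgroup.mem_map.mpr ⟨ι₂ f₀⁻¹, ⟨f₀⁻¹, rfl⟩, rfl⟩, ?_⟩
      rw [Abelianization.map_of, ← map_mul]
      congr 1
  · rintro ⟨Ψ, hfib, x, hx, hxeq⟩
    set q₂ : Abelianization G₂ →* Multiplicative ℤ :=
      Abelianization.lift SemidirectProduct.rightHom with hq₂_def
    have hq : ∀ y ∈ Subgroup.map (Abelianization.of) ι₂.range, q₂ y = 1 := by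
      intro y hy
      simp only [Subgroup.mem_map, MonoidHom.mem_range] at hy
      obtain ⟨_, ⟨f, rfl⟩, rfl⟩ := hy
      rw [hq₂_def, Abelianization.lift_apply_of]
      exact rightHom_inl f
    have hπ : ∀ gg : G₁, rightHom (Ψ gg) = rightHom gg := by
      have key : (q₂.comp (Abelianization.map Ψ.toMonoidHom)).comp Abelianization.of
          = (rightHom : G₁ →* Multiplicative ℤ) := by
        apply SemidirectProduct.hom_ext
        · refine MonoidHom.ext fun f => ?_
          simp only [MonoidHom.comp_apply]
          have hmem : (Abelianization.map Ψ.toMonoidHom) (Abelianization.of (ι₁ f))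
              ∈ Subgroup.map Abelianization.of ι₂.range :=
            hfib (Subgroup.mem_map.mpr ⟨Abelianization.of (ι₁ f),
              Subgroup.mem_map.mpr ⟨ι₁ f, ⟨f, rfl⟩, rfl⟩, rfl⟩)
          rw [hq _ hmem]
          exact (rightHom_inl f).symm
        · apply MonoidHom.ext_mint
          simp only [MonoidHom.comp_apply]
          rw [show (SemidirectProduct.inr (Multiplicative.ofAdd 1) : G₁) = t₁ from rfl,
            hxeq, map_mul, hq x hx, mul_one, hq₂_def, Abelianization.lift_apply_of]
          rw [show (t₂ : G₂) = SemidirectProduct.inr (Multiplicative.ofAdd 1) from rfl]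
          rw [rightHom_inr, rightHom_inr]
      intro gg
      have h := DFunLike.congr_fun key gg
      simp only [MonoidHom.comp_apply, Abelianization.map_of, hq₂_def,
        Abelianization.lift_apply_of] at h
      exact h
    have hπ' : ∀ gg : G₂, rightHom (Ψ.symm gg) = rightHom gg := by
      intro gg
      have h := hπ (Ψ.symm gg)
      rw [MulEquiv.apply_symm_apply] at h
      exact h.symm
    have hfib' : ∀ f : F, Ψ (ι₁ f) = ι₂ ((Ψ (ι₁ f)).left) := by
      intro f
      have h1 : (Ψ (ι₁ f)).right = 1 := by
        have := hπ (ι₁ f)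
        rwa [show rightHom (ι₁ f) = 1 from rightHom_inl f, rightHom_eq_right] at this
      conv_lhs => rw [← inl_left_mul_inr_right (Ψ (ι₁ f))]
      rw [h1, map_one, mul_one]
    have hfib'' : ∀ f : F, Ψ.symm (ι₂ f) = ι₁ ((Ψ.symm (ι₂ f)).left) := by
      intro f
      have h1 : (Ψ.symm (ι₂ f)).right = 1 := by
        have := hπ' (ι₂ f)
        rwa [show rightHom (ι₂ f) = 1 from rightHom_inl f, rightHom_eq_right] at this
      conv_lhs => rw [← inl_left_mul_inr_right (Ψ.symm (ι₂ f))]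
      rw [h1, map_one, mul_one]
    set ψ : F ≃* F :=
      { toFun := fun f => (Ψ (ι₁ f)).left
        invFun := fun f => (Ψ.symm (ι₂ f)).left
        left_inv := fun f => inl_injective (φ := zpowersHom (MulAut F) φ₁) (by
          rw [← hfib'' ((Ψ (ι₁ f)).left), ← hfib' f, MulEquiv.symm_apply_apply])
        right_inv := fun f => inl_injective (φ := zpowersHom (MulAut F) φ₂) (by
          rw [← hfib' ((Ψ.symm (ι₂ f)).left), ← hfib'' f, MulEquiv.apply_symm_apply])
        map_mul' := fun a b => inl_injective (φ := zpowersHom (MulAut F) φ₂) (by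
          calc (SemidirectProduct.inl ((Ψ (ι₁ (a * b))).left) : G₂)
              = Ψ (ι₁ (a * b)) := (hfib' _).symm
            _ = Ψ (ι₁ a) * Ψ (ι₁ b) := by rw [map_mul, map_mul]
            _ = ι₂ ((Ψ (ι₁ a)).left) * ι₂ ((Ψ (ι₁ b)).left) := by
                rw [← hfib' a, ← hfib' b]
            _ = SemidirectProduct.inl ((Ψ (ι₁ a)).left * (Ψ (ι₁ b)).left) :=
                (map_mul ι₂ _ _).symm) }
      with hψ_def
    set g : F := (Ψ t₁).left with hg_def
    have hΨt : Ψ t₁ = ι₂ g * t₂ := by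
      have h1 : (Ψ t₁).right = Multiplicative.ofAdd 1 := by
        have := hπ t₁
        rwa [show rightHom (t₁ : G₁) = Multiplicative.ofAdd 1 from rightHom_inr _,
          rightHom_eq_right] at this
      conv_lhs => rw [← inl_left_mul_inr_right (Ψ t₁)]
      rw [h1]
    have hmain : ∀ f : F, ψ (φ₁ f) = g * φ₂ (ψ f) * g⁻¹ := by
      intro f
      apply inl_injective (φ := zpowersHom (MulAut F) φ₂)
      have e1 : t₁ * ι₁ f * t₁⁻¹ = ι₁ (φ₁ f) := susp_conj φ₁ f
      have e2 := congrArg Ψ e1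
      rw [map_mul, map_mul, map_inv, hΨt, hfib' f, hfib' (φ₁ f)] at e2
      show (SemidirectProduct.inl (ψ (φ₁ f)) : G₂) = SemidirectProduct.inl (g * φ₂ (ψ f) * g⁻¹)
      have hψval : (SemidirectProduct.inl (ψ (φ₁ f)) : G₂)
          = ι₂ ((Ψ (ι₁ (φ₁ f))).left) := rfl
      rw [hψval, ← e2]
      have hconj : (t₂ : G₂) * ι₂ ((Ψ (ι₁ f)).left) * t₂⁻¹ = ι₂ (φ₂ ((Ψ (ι₁ f)).left)) :=
        susp_conj φ₂ _
      have hψf : (ψ f : F) = (Ψ (ι₁ f)).left := rfl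
      rw [hψf]
      calc (ι₂ g * t₂) * ι₂ ((Ψ (ι₁ f)).left) * (ι₂ g * t₂)⁻¹
          = ι₂ g * (t₂ * ι₂ ((Ψ (ι₁ f)).left) * t₂⁻¹) * (ι₂ g)⁻¹ := by rw [mul_inv_rev]; simp only [mul_assoc]
        _ = ι₂ g * ι₂ (φ₂ ((Ψ (ι₁ f)).left)) * (ι₂ g)⁻¹ := by rw [hconj]
        _ = SemidirectProduct.inl (g * φ₂ ((Ψ (ι₁ f)).left) * g⁻¹) := by
            rw [← map_inv, ← map_mul, ← map_mul]
    refine ⟨ψ, (φ₂.symm g)⁻¹, fun f => ?_⟩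
    rw [hmain f, inv_inv, map_mul, map_mul, map_inv, MulEquiv.apply_symm_apply]
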